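/- Rouché's theorem for the disc: let D ⊂ ℂ be an open set containing a closed disc Δ̄ of center c and radius R > 0, and let f, g : D → ℂ be holomorphic. If |f(z) − g(z)| < |g(z)| for every z on the boundary circle |z − c| = R, then f has a zero in the open disc Δ if and only if g has a zero in Δ. -/

import Mathlib

open Metric

/-- Auxiliary: if `φ` is holomorphic on an open set containing the closed ball and has
positive real part on the boundary sphere, then `φ` has no zero in the open ball. -/
lemma aux_no_zero (U : Set ℂ) (hU : IsOpen U) (c : ℂ) (R : ℝ) (hR : 0 < R)
    (hsub : closedBall c R ⊆ U) (φ : ℂ → ℂ) (hφ : DifferentiableOn ℂ φ U)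
    (hre : ∀ z ∈ sphere c R, 0 < (φ z).re) :
    ∀ z ∈ ball c R, φ z ≠ 0 := by
  intro z hz hz0
  set F : ℂ → ℂ := fun w => Complex.exp (-(φ w)) with hF
  have hFd : DifferentiableOn ℂ F U := hφ.neg.cexp
  have hsne : (sphere c R).Nonempty := NormedSpace.sphere_nonempty.2 hR.le
  have hcont : ContinuousOn (fun w => ‖F w‖) (sphere c R) :=
    (hFd.continuousOn.mono fun x hx => hsub (sphere_subset_closedBall hx)).norm
  obtain ⟨w, hw, hwmax⟩ := (isCompact_sphere c R).exists_isMaxOn hsne hcont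
  have hC : ‖F w‖ < 1 := by
    have h1 : ‖F w‖ = Real.exp (-(φ w).re) := by
      simp [hF, Complex.norm_exp]
    rw [h1]
    have := hre w hw
    calc Real.exp (-(φ w).re) < Real.exp 0 := Real.exp_lt_exp.2 (by linarith)
      _ = 1 := Real.exp_zero
  have hle : ‖F z‖ ≤ ‖F w‖ := by
    refine Complex.norm_le_of_forall_mem_frontier_norm_le (U := ball c R) isBounded_ball ?_ ?_ ?_
    · exact ⟨hFd.mono fun x hx => hsub (ball_subset_closedBall hx),
        hFd.continuousOn.mono (by rw [closure_ball c hR.ne']; exact hsub)⟩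
    · intro x hx
      rw [frontier_ball c hR.ne'] at hx
      exact hwmax hx
    · exact subset_closure hz
  rw [show F z = 1 by simp [hF, hz0], norm_one] at hle
  linarith

/-- Rouché's theorem for the disc: if `|f − g| < |g|` on the boundary circle,
then `f` has a zero in the open disc iff `g` does. -/
theorem rouche_disc (D : Set ℂ) (hD : IsOpen D) (c : ℂ) (R : ℝ) (hR : 0 < R)
    (hsub : closedBall c R ⊆ D) (f g : ℂ → ℂ)
    (hf : DifferentiableOn ℂ f D) (hg : DifferentiableOn ℂ g D)
    (hbd : ∀ z ∈ sphere c R, ‖f z - g z‖ < ‖g z‖) :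
    (∃ z ∈ ball c R, f z = 0) ↔ ∃ z ∈ ball c R, g z = 0 := by
  have hgs : ∀ z ∈ sphere c R, g z ≠ 0 := by
    intro z hz h0
    have := hbd z hz
    rw [h0] at this
    simp at this
    exact absurd this (norm_nonneg _).not_gt
  have hfs : ∀ z ∈ sphere c R, f z ≠ 0 := by
    intro z hz h0
    have h1 := hbd z hz
    rw [h0, zero_sub, norm_neg] at h1
    exact absurd h1 (lt_irrefl _)
  -- Re (f z / g z) > 0 on the sphere
  have hre : ∀ z ∈ sphere c R, 0 < (f z / g z).re := by
    intro z hz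
    have hg0 := hgs z hz
    have habs : (0:ℝ) < ‖g z‖ := norm_pos_iff.mpr hg0
    have h1 : ‖f z / g z - 1‖ < 1 := by
      rw [show f z / g z - 1 = (f z - g z) / g z by field_simp, norm_div,
        div_lt_one habs]
      exact hbd z hz
    have h2 : -(f z / g z - 1).re ≤ ‖f z / g z - 1‖ :=
      (neg_le_abs _).trans (Complex.abs_re_le_norm _)
    have h3 : (f z / g z).re = 1 + (f z / g z - 1).re := by
      simp [Complex.sub_re]
    linarith
  have sphere_of : ∀ x ∈ closedBall c R, x ∉ ball c R → x ∈ sphere c R := by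
    intro x hx hxb
    rcases lt_or_eq_of_le (mem_closedBall.1 hx) with h | h
    · exact absurd (mem_ball.2 h) hxb
    · exact mem_sphere.2 h
  constructor
  · rintro ⟨z, hz, hz0⟩
    by_contra hgn
    push_neg at hgn
    have hg0 : ∀ x ∈ closedBall c R, g x ≠ 0 := by
      intro x hx
      by_cases hxb : x ∈ ball c R
      · exact hgn x hxb
      · exact hgs x (sphere_of x hx hxb)
    set U : Set ℂ := D ∩ g ⁻¹' {0}ᶜ with hU
    have hUo : IsOpen U := hg.continuousOn.isOpen_inter_preimage hD isOpen_compl_singleton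
    have hUsub : closedBall c R ⊆ U := fun x hx => ⟨hsub hx, hg0 x hx⟩
    have hφ : DifferentiableOn ℂ (fun x => f x / g x) U :=
      (hf.mono Set.inter_subset_left).div (hg.mono Set.inter_subset_left)
        fun x hx => hx.2
    have := aux_no_zero U hUo c R hR hUsub _ hφ
      (fun x hx => hre x hx) z hz
    exact this (by rw [hz0, zero_div])
  · rintro ⟨z, hz, hz0⟩
    by_contra hfn
    push_neg at hfn
    have hf0 : ∀ x ∈ closedBall c R, f x ≠ 0 := by
      intro x hx
      by_cases hxb : x ∈ ball c R
      · exact hfn x hxb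
      · exact hfs x (sphere_of x hx hxb)
    set U : Set ℂ := D ∩ f ⁻¹' {0}ᶜ with hU
    have hUo : IsOpen U := hf.continuousOn.isOpen_inter_preimage hD isOpen_compl_singleton
    have hUsub : closedBall c R ⊆ U := fun x hx => ⟨hsub hx, hf0 x hx⟩
    have hφ : DifferentiableOn ℂ (fun x => g x / f x) U :=
      (hg.mono Set.inter_subset_left).div (hf.mono Set.inter_subset_left)
        fun x hx => hx.2
    have hre' : ∀ x ∈ sphere c R, 0 < (g x / f x).re := by
      intro x hx
      have hne : f x / g x ≠ 0 := div_ne_zero (hfs x hx) (hgs x hx)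
      have : g x / f x = (f x / g x)⁻¹ := by rw [inv_div]
      rw [this, Complex.inv_re]
      exact div_pos (hre x hx) (Complex.normSq_pos.2 hne)
    have := aux_no_zero U hUo c R hR hUsub _ hφ hre' z hz
    exact this (by rw [hz0, zero_div])
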